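/- Let F(u) := sup_{a>0} log(1 + u(1 − e^{−a})) / ( e^{a} (1 + u(1 − e^{−a})) ) for u > 0. Then F(u) < e^{−1} for every u > 0, and F(u) → e^{−1} as u → ∞. -/

import Mathlib

noncomputable def Fsup (u : ℝ) : ℝ :=
  sSup ((fun a : ℝ => Real.log (1 + u * (1 - Real.exp (-a))) /
      (Real.exp a * (1 + u * (1 - Real.exp (-a))))) '' Set.Ioi 0)


open Real Filter

lemma log_le_mul_exp_neg_one {x : ℝ} (hx : 0 < x) : Real.log x ≤ x * Real.exp (-1) := by
  have h := Real.log_le_sub_one_of_pos (mul_pos hx (Real.exp_pos (-1)))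
  rw [Real.log_mul (ne_of_gt hx) (ne_of_gt (Real.exp_pos _)), Real.log_exp] at h
  linarith

lemma key (u a : ℝ) (hu : 0 < u) (ha : 0 < a) :
    Real.log (1 + u * (1 - Real.exp (-a))) /
      (Real.exp a * (1 + u * (1 - Real.exp (-a)))) ≤ Real.exp (-1) * Real.exp (-a) := by
  set x := 1 + u * (1 - Real.exp (-a)) with hxdef
  have hea : Real.exp (-a) < 1 := by
    rw [Real.exp_lt_one_iff]; linarith
  have hx1 : 1 ≤ x := by nlinarith [Real.exp_pos (-a)]
  have hx : 0 < x := by linarith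
  have hlog := log_le_mul_exp_neg_one hx
  rw [div_le_iff₀ (by positivity)]
  have h1 : Real.exp (-a) * Real.exp a = 1 := by rw [← Real.exp_add]; simp
  have h2 : Real.exp (-1) * Real.exp (-a) * (Real.exp a * x) = Real.exp (-1) * x := by
    rw [show Real.exp (-1) * Real.exp (-a) * (Real.exp a * x)
        = Real.exp (-1) * x * (Real.exp (-a) * Real.exp a) by ring, h1, mul_one]
  rw [h2]; linarith


lemma fset_nonempty (u : ℝ) :
    ((fun a : ℝ => Real.log (1 + u * (1 - Real.exp (-a))) /
      (Real.exp a * (1 + u * (1 - Real.exp (-a))))) '' Set.Ioi 0).Nonempty :=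
  Set.Nonempty.image _ ⟨1, by norm_num⟩

lemma fset_ub (u : ℝ) (hu : 0 < u) :
    ∀ y ∈ ((fun a : ℝ => Real.log (1 + u * (1 - Real.exp (-a))) /
      (Real.exp a * (1 + u * (1 - Real.exp (-a))))) '' Set.Ioi 0), y ≤ Real.exp (-1) := by
  rintro y ⟨a, ha, rfl⟩
  refine (key u a hu ha).trans ?_
  have h1 : Real.exp (-a) ≤ 1 := by
    rw [Real.exp_le_one_iff]; simp at ha ⊢; linarith
  nlinarith [Real.exp_pos (-1)]

lemma part1 (u : ℝ) (hu : 0 < u) : Fsup u < Real.exp (-1) := by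
  set δ : ℝ := min (1/2) (1/(4*u)) with hδdef
  have hδpos : 0 < δ := lt_min (by norm_num) (by positivity)
  have hδhalf : δ ≤ 1/2 := min_le_left _ _
  have huδ : u * δ ≤ 1/4 := by
    have : δ ≤ 1/(4*u) := min_le_right _ _
    calc u * δ ≤ u * (1/(4*u)) := by nlinarith
    _ = 1/4 := by field_simp
  have h1δ : 0 < 1 - δ := by linarith
  set t : ℝ := -Real.log (1 - δ) with htdef
  have ht : 0 < t := by
    have := Real.log_neg h1δ (by linarith : 1 - δ < 1)
    simp [htdef]; linarith
  have hexpt : Real.exp (-t) = 1 - δ := by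
    rw [htdef, neg_neg, Real.exp_log h1δ]
  have hbound : ∀ y ∈ ((fun a : ℝ => Real.log (1 + u * (1 - Real.exp (-a))) /
      (Real.exp a * (1 + u * (1 - Real.exp (-a))))) '' Set.Ioi 0),
      y ≤ max (Real.exp (-1) * (1 - δ)) (1/4) := by
    rintro y ⟨a, ha, rfl⟩
    simp only [Set.mem_Ioi] at ha
    rcases le_or_gt t a with hta | hta
    · refine le_max_of_le_left ?_
      refine (key u a hu ha).trans ?_
      have : Real.exp (-a) ≤ Real.exp (-t) := Real.exp_le_exp.mpr (by linarith)
      rw [hexpt] at this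
      nlinarith [Real.exp_pos (-1)]
    · refine le_max_of_le_right ?_
      set x := 1 + u * (1 - Real.exp (-a)) with hxdef
      have hea : Real.exp (-a) < 1 := by rw [Real.exp_lt_one_iff]; linarith
      have heat : Real.exp (-t) < Real.exp (-a) := Real.exp_lt_exp.mpr (by linarith)
      rw [hexpt] at heat
      have hx1 : 1 ≤ x := by nlinarith
      have hxsmall : x - 1 ≤ 1/4 := by
        have : u * (1 - Real.exp (-a)) ≤ u * δ := by nlinarith
        simp only [hxdef]; linarith
      have hlog : Real.log x ≤ 1/4 := by
        have := Real.log_le_sub_one_of_pos (by linarith : (0:ℝ) < x)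
        linarith
      have hd : 1 ≤ Real.exp a * x := by nlinarith [Real.add_one_le_exp a]
      calc Real.log x / (Real.exp a * x) ≤ Real.log x :=
            div_le_self (Real.log_nonneg hx1) hd
        _ ≤ 1/4 := hlog
  have hsup := csSup_le (fset_nonempty u) hbound
  refine hsup.trans_lt (max_lt ?_ ?_)
  · nlinarith [Real.exp_pos (-1)]
  · have h4 : Real.exp 1 < 4 := lt_trans Real.exp_one_lt_d9 (by norm_num)
    rw [Real.exp_neg, show (1:ℝ)/4 = 4⁻¹ by norm_num]
    exact inv_strictAnti₀ (Real.exp_pos 1) h4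

lemma part2 : Filter.Tendsto Fsup Filter.atTop (nhds (Real.exp (-1))) := by
  have hub : ∀ u : ℝ, 0 < u → Fsup u ≤ Real.exp (-1) := fun u hu =>
    csSup_le (fset_nonempty u) (fset_ub u hu)
  have hlb : ∀ u : ℝ, Real.exp 1 - 1 < u →
      Real.exp (-1) * (1 - (Real.exp 1 - 1)/u) ≤ Fsup u := by
    intro u hu
    have he1 : 1 < Real.exp 1 := by
      have := Real.add_one_le_exp 1; linarith
    have hu0 : 0 < u := lt_trans (by linarith) hu
    have hq0 : 0 < (Real.exp 1 - 1)/u := div_pos (by linarith) hu0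
    have hq1 : (Real.exp 1 - 1)/u < 1 := (div_lt_one hu0).mpr hu
    set z : ℝ := 1 - (Real.exp 1 - 1)/u with hzdef
    have hz0 : 0 < z := by rw [hzdef]; linarith
    have hz1 : z < 1 := by rw [hzdef]; linarith
    set a₀ : ℝ := -Real.log z with ha₀def
    have ha₀ : 0 < a₀ := by
      have := Real.log_neg hz0 hz1
      simp [ha₀def]; linarith
    have hexp : Real.exp (-a₀) = z := by
      rw [ha₀def, neg_neg, Real.exp_log hz0]
    have hx : 1 + u * (1 - Real.exp (-a₀)) = Real.exp 1 := by
      rw [hexp, hzdef]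
      field_simp
      ring
    have hval : Real.log (1 + u * (1 - Real.exp (-a₀))) /
        (Real.exp a₀ * (1 + u * (1 - Real.exp (-a₀)))) = Real.exp (-1) * z := by
      rw [hx, Real.log_exp, ← hexp, Real.exp_neg 1, Real.exp_neg a₀]
      have h1 : Real.exp a₀ ≠ 0 := ne_of_gt (Real.exp_pos _)
      have h2 : Real.exp 1 ≠ 0 := ne_of_gt (Real.exp_pos _)
      field_simp
    have hmem : Real.exp (-1) * z ∈
        ((fun a : ℝ => Real.log (1 + u * (1 - Real.exp (-a))) /
          (Real.exp a * (1 + u * (1 - Real.exp (-a))))) '' Set.Ioi 0) :=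
      ⟨a₀, ha₀, hval⟩
    have hbdd : BddAbove ((fun a : ℝ => Real.log (1 + u * (1 - Real.exp (-a))) /
        (Real.exp a * (1 + u * (1 - Real.exp (-a))))) '' Set.Ioi 0) :=
      ⟨Real.exp (-1), fun y hy => fset_ub u hu0 y hy⟩
    exact le_csSup hbdd hmem
  have hg : Filter.Tendsto (fun u : ℝ => Real.exp (-1) * (1 - (Real.exp 1 - 1)/u))
      Filter.atTop (nhds (Real.exp (-1))) := by
    have h0 : Filter.Tendsto (fun u : ℝ => (Real.exp 1 - 1)/u) Filter.atTop (nhds 0) :=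
      Filter.Tendsto.div_atTop tendsto_const_nhds Filter.tendsto_id
    have := (tendsto_const_nhds (x := (1:ℝ)) (f := Filter.atTop (α := ℝ))).sub h0
    have h2 := ((tendsto_const_nhds (x := Real.exp (-1)) (f := Filter.atTop (α := ℝ))).mul this)
    simpa using h2
  refine tendsto_of_tendsto_of_tendsto_of_le_of_le' hg tendsto_const_nhds ?_ ?_
  · filter_upwards [Filter.eventually_gt_atTop (Real.exp 1 - 1)] with u hu
    exact hlb u hu
  · filter_upwards [Filter.eventually_gt_atTop 0] with u hu
    exact hub u hu

/-- F(u) < e⁻¹ for every u > 0, and F(u) → e⁻¹ as u → ∞. -/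
theorem stmt_5 :
    (∀ u : ℝ, 0 < u → Fsup u < Real.exp (-1)) ∧
      Filter.Tendsto Fsup Filter.atTop (nhds (Real.exp (-1))) :=
  ⟨part1, part2⟩
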